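/- If 1/e ≤ x < y ≤ 1 then p_n(x) > p_n(y) for every n ≥ 1; that is, the x-strategy strictly dominates the y-strategy for every number of items whenever 1/e ≤ x < y ≤ 1. -/

import Mathlib

open Finset Real

/-- `p_n(x) = 1 - x - Σ_{k=2}^{n} (1-x)^k/(k(k-1))`, the winning probability of the
`x`-strategy with `n` items. -/
noncomputable def pwin (n : ℕ) (x : ℝ) : ℝ :=
  1 - x - ∑ k ∈ Finset.Icc 2 n, (1 - x) ^ k / ((k : ℝ) * ((k : ℝ) - 1))

lemma sum_bound (n : ℕ) {u : ℝ} (hu0 : 0 ≤ u) (hu1 : u < 1) :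
    ∑ k ∈ Finset.Icc 2 n, u ^ (k - 1) / ((k : ℝ) - 1) ≤ -Real.log (1 - u) := by
  have hs : HasSum (fun m : ℕ => u ^ (m + 1) / (m + 1)) (-Real.log (1 - u)) :=
    Real.hasSum_pow_div_log_of_abs_lt_one (by rw [abs_of_nonneg hu0]; exact hu1)
  have hre : ∑ k ∈ Finset.Icc 2 n, u ^ (k - 1) / ((k : ℝ) - 1)
      = ∑ m ∈ Finset.range (n + 1 - 2), u ^ (m + 1) / ((m : ℝ) + 1) := by
    rw [show Finset.Icc 2 n = Finset.Ico 2 (n+1) by rw [Finset.Ico_add_one_right_eq_Icc],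
      Finset.sum_Ico_eq_sum_range]
    apply Finset.sum_congr rfl
    intro m _
    congr 1
    · congr 1; omega
    · push_cast; ring
  rw [hre]
  exact sum_le_hasSum _ (fun m _ => by positivity) hs

lemma pwin_hasDerivAt (n : ℕ) (x : ℝ) :
    HasDerivAt (pwin n)
      (-1 + ∑ k ∈ Finset.Icc 2 n, (1 - x) ^ (k - 1) / ((k : ℝ) - 1)) x := by
  have hsum : HasDerivAt
      (fun x : ℝ => ∑ k ∈ Finset.Icc 2 n, (1 - x) ^ k / ((k : ℝ) * ((k : ℝ) - 1)))
      (∑ k ∈ Finset.Icc 2 n, -((1 - x) ^ (k - 1) / ((k : ℝ) - 1))) x := by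
    apply HasDerivAt.fun_sum
    intro k hk
    have hk2 : 2 ≤ k := (Finset.mem_Icc.mp hk).1
    have h1 : HasDerivAt (fun x : ℝ => 1 - x) (-1) x := by
      simpa using (hasDerivAt_id x).const_sub 1
    have h2 := (h1.pow k).div_const ((k : ℝ) * ((k : ℝ) - 1))
    refine h2.congr_deriv ?_
    have hk0 : (k : ℝ) ≠ 0 := by positivity
    have hk1 : (k : ℝ) - 1 ≠ 0 := by
      have : (2:ℝ) ≤ (k:ℝ) := by exact_mod_cast hk2
      intro h; linarith
    field_simp
  have h3 : HasDerivAt (fun x : ℝ => 1 - x) (-1) x := by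
    simpa using (hasDerivAt_id x).const_sub 1
  have := h3.sub hsum
  refine this.congr_deriv ?_
  rw [Finset.sum_neg_distrib]
  ring
  
theorem stmt7 (x y : ℝ) (hx : (Real.exp 1)⁻¹ ≤ x) (hxy : x < y) (hy : y ≤ 1)
    (n : ℕ) (hn : 1 ≤ n) : pwin n y < pwin n x := by
  have he : (0:ℝ) < (Real.exp 1)⁻¹ := by positivity
  have key : StrictAntiOn (pwin n) (Set.Icc (Real.exp 1)⁻¹ 1) := by
    apply strictAntiOn_of_deriv_neg (convex_Icc _ _)
    · exact fun z _ => ((pwin_hasDerivAt n z).continuousAt).continuousWithinAt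
    · intro z hz
      rw [interior_Icc] at hz
      rw [(pwin_hasDerivAt n z).deriv]
      have hz0 : 0 < z := lt_trans he hz.1
      have h1 : ∑ k ∈ Finset.Icc 2 n, (1 - z) ^ (k - 1) / ((k : ℝ) - 1)
          ≤ -Real.log (1 - (1 - z)) :=
        sum_bound n (by linarith [hz.2]) (by linarith [hz.1])
      have h2 : -Real.log z < 1 := by
        have := Real.log_lt_log he hz.1
        rw [Real.log_inv, Real.log_exp] at this
        linarith
      have h3 : (1 : ℝ) - (1 - z) = z := by ring
      rw [h3] at h1
      linarith
  exact key (Set.mem_Icc.mpr ⟨hx, (hxy.trans_le hy).le⟩)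
    (Set.mem_Icc.mpr ⟨(hx.trans_lt hxy).le, hy⟩) hxy
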